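/- Let G be a group and H ≤ K ≤ G subgroups such that K has the property that for every g ∈ G with g ∉ K one has H ∩ gHg⁻¹ = {1}. Let n ≥ 1 and let (x₀, …, xₙ) be an (n+1)-tuple of left cosets in G/H whose images in G/K under the natural projection G/H → G/K are pairwise distinct. If g ∈ G satisfies g·xᵢ = xᵢ for all i = 0, …, n, then g = 1. In other words, the isotropy subgroup of such a tuple under the diagonal G-action is trivial. -/
import Mathlib

/-- Let `G` be a group with subgroups `H ≤ K ≤ G` such that `H ∩ gHg⁻¹ = {1}` for every
`g ∉ K`.  Let `n ≥ 1` and let `(g₀H, …, gₙH)` be a tuple of left cosets whose images in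
`G/K` are pairwise distinct.  If `g ∈ G` fixes each coset `gᵢH` (i.e.
`(g gᵢ)H = gᵢH` for all `i`), then `g = 1`: the isotropy subgroup of such a tuple under
the diagonal `G`-action is trivial. -/
theorem stabilizer_of_distinct_tuple_trivial
    {G : Type} [Group G] (H K : Subgroup G) (hHK : H ≤ K)
    (hconj : ∀ g : G, g ∉ K → ∀ x : G, x ∈ H → g⁻¹ * x * g ∈ H → x = 1)
    (n : ℕ) (hn : 1 ≤ n) (gs : Fin (n + 1) → G)
    (hdist : ∀ i j : Fin (n + 1), i ≠ j →
      (QuotientGroup.mk (gs i) : G ⧸ K) ≠ QuotientGroup.mk (gs j))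
    (g : G)
    (hfix : ∀ i : Fin (n + 1),
      (QuotientGroup.mk (g * gs i) : G ⧸ H) = QuotientGroup.mk (gs i)) :
    g = 1 := by
  have h01 : (0 : Fin (n + 1)) ≠ ⟨1, by omega⟩ := by
    intro h; simpa [Fin.ext_iff] using h
  have hK : (gs 0)⁻¹ * gs ⟨1, by omega⟩ ∉ K := by
    intro hk
    exact hdist 0 ⟨1, by omega⟩ h01 (QuotientGroup.eq.2 hk)
  have hx : ∀ i : Fin (n + 1), (gs i)⁻¹ * g⁻¹ * gs i ∈ H := by
    intro i
    have := QuotientGroup.eq.1 (hfix i)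
    simpa [mul_inv_rev, mul_assoc] using this
  set t := (gs 0)⁻¹ * gs ⟨1, by omega⟩ with ht
  have hx0 : (gs 0)⁻¹ * g⁻¹ * gs 0 ∈ H := hx 0
  have hx1 : t⁻¹ * ((gs 0)⁻¹ * g⁻¹ * gs 0) * t ∈ H := by
    have := hx ⟨1, by omega⟩
    simpa [ht, mul_inv_rev, mul_assoc] using this
  have := hconj t hK _ hx0 hx1
  have : g⁻¹ = 1 := by
    have h := congrArg (fun y => gs 0 * y * (gs 0)⁻¹) this
    simpa [mul_assoc] using h
  simpa using inv_eq_one.mp this
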